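/- arXiv:1702.08553 — 6 statements merged into one kernel-verified Lean document; each statement's English description precedes it below -/
import Mathlib

section
/- Let V ⊆ H with π(V) > 0 and h* ∈ V, let ε > 0, write p_map = max_{h∈V} π|_V(h), and pick 0 < α < p_map. If Φ(V) ≤ 2ε · (min{π|_V(h*), p_map − α})², then every h ∈ V with π|_V(h) ≥ p_map − α satisfies d(h*, h) ≤ ε. -/
open MeasureTheory Finset

/-- `derr D pred h h'` is the hypothesis distance
`d(h,h') = Pr_{x ~ D}(h(x) ≠ h'(x))`. -/
noncomputable def derr {X 𝓗 : Type*} [MeasurableSpace X] (D : Measure X)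
    (pred : 𝓗 → X → Bool) (h h' : 𝓗) : ℝ :=
  (D {x | pred h x ≠ pred h' x}).toReal

/-- `pmass π V` is the probability mass `π(V)`. -/
noncomputable def pmass {𝓗 : Type*} (π : 𝓗 → ℝ) (V : Finset 𝓗) : ℝ :=
  ∑ h ∈ V, π h

/-- `avgDiam D pred π V` is the average diameter
`Φ(V) = E_{h,h' ~ π|_V}[d(h,h')]`. -/
noncomputable def avgDiam {X 𝓗 : Type*} [MeasurableSpace X] (D : Measure X)
    (pred : 𝓗 → X → Bool) (π : 𝓗 → ℝ) (V : Finset 𝓗) : ℝ :=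
  (∑ h ∈ V, ∑ h' ∈ V, π h * π h' * derr D pred h h') / (pmass π V) ^ 2

/-- MAP estimation.  If `Φ(V) ≤ 2ε (min{π|_V(h*), p_map - α})²`,
then every `h ∈ V` with `π|_V(h) ≥ p_map - α` satisfies `d(h*,h) ≤ ε`. -/
theorem stmt_1 {X 𝓗 : Type*} [MeasurableSpace X] [Fintype 𝓗]
    (D : Measure X) [IsProbabilityMeasure D] (pred : 𝓗 → X → Bool)
    (π : 𝓗 → ℝ) (hπpos : ∀ h, 0 < π h) (hπsum : ∑ h, π h = 1)
    (V : Finset 𝓗) (hV : 0 < pmass π V)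
    (hstar : 𝓗) (hmem : hstar ∈ V) (ε : ℝ) (hε : 0 < ε)
    (pmap : ℝ)
    (hub : ∀ h ∈ V, π h / pmass π V ≤ pmap)
    (hach : ∃ h ∈ V, π h / pmass π V = pmap)
    (α : ℝ) (hα0 : 0 < α) (hαp : α < pmap)
    (hdiam : avgDiam D pred π V
      ≤ 2 * ε * (min (π hstar / pmass π V) (pmap - α)) ^ 2) :
    ∀ h ∈ V, pmap - α ≤ π h / pmass π V → derr D pred hstar h ≤ ε := by
  classical
  intro h hmemh hge
  have hP : 0 < pmass π V := hV
  set P := pmass π V with hPdef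
  set m := min (π hstar / P) (pmap - α) with hm
  have hm0 : 0 < m := lt_min (div_pos (hπpos hstar) hP) (by linarith)
  have hdnn : ∀ a b : 𝓗, 0 ≤ derr D pred a b := fun a b => ENNReal.toReal_nonneg
  by_cases hcase : h = hstar
  · subst hcase
    have : {x | pred h x ≠ pred h x} = (∅ : Set X) := by ext x; simp
    simp [derr, this]
    positivity
  · -- main case
    have hne : hstar ≠ h := fun e => hcase e.symm
    set d := derr D pred hstar h with hd
    have hsymm : derr D pred h hstar = d := by
      have : {x | pred h x ≠ pred hstar x} = {x | pred hstar x ≠ pred h x} := by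
        ext x; exact ne_comm
      simp [derr, this, hd]
    set F : 𝓗 → ℝ := fun a => ∑ b ∈ V, π a * π b * derr D pred a b with hF
    have hFnn : ∀ a, 0 ≤ F a := fun a =>
      Finset.sum_nonneg fun b _ => mul_nonneg (mul_nonneg (hπpos a).le (hπpos b).le) (hdnn a b)
    have h1 : π hstar * π h * d ≤ F hstar :=
      Finset.single_le_sum (f := fun b => π hstar * π b * derr D pred hstar b)
        (fun b _ => mul_nonneg (mul_nonneg (hπpos hstar).le (hπpos b).le) (hdnn hstar b)) hmemh
    have h2 : π h * π hstar * d ≤ F h := by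
      have := Finset.single_le_sum (f := fun b => π h * π b * derr D pred h b)
        (fun b _ => mul_nonneg (mul_nonneg (hπpos h).le (hπpos b).le) (hdnn h b)) hmem
      simpa [hsymm] using this
    have hpair : F hstar + F h ≤ ∑ a ∈ V, F a := by
      have hsub : ({hstar, h} : Finset 𝓗) ⊆ V := by
        intro a ha
        rcases Finset.mem_insert.mp ha with rfl | ha
        · exact hmem
        · rwa [Finset.mem_singleton.mp ha]
      calc F hstar + F h = ∑ a ∈ ({hstar, h} : Finset 𝓗), F a := (Finset.sum_pair hne).symm
        _ ≤ ∑ a ∈ V, F a := Finset.sum_le_sum_of_subset_of_nonneg hsub fun a _ _ => hFnn a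
    have hS : 2 * (π hstar * π h * d) ≤ ∑ a ∈ V, F a := by
      nlinarith [h1, h2]
    have hSle : ∑ a ∈ V, F a ≤ 2 * ε * m ^ 2 * P ^ 2 := by
      have := hdiam
      rw [avgDiam, div_le_iff₀ (by positivity)] at this
      simpa [hF, hPdef] using this
    have hs1 : m * P ≤ π hstar := by
      have : m ≤ π hstar / P := min_le_left _ _
      calc m * P ≤ (π hstar / P) * P := by nlinarith
        _ = π hstar := div_mul_cancel₀ _ (ne_of_gt hP)
    have hs2 : m * P ≤ π h := by
      have h3 : m ≤ π h / P := le_trans (min_le_right _ _) hge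
      calc m * P ≤ (π h / P) * P := by nlinarith
        _ = π h := div_mul_cancel₀ _ (ne_of_gt hP)
    have hdn : 0 ≤ d := hdnn _ _
    have key : m * P * (m * P) * d ≤ π hstar * π h * d :=
      mul_le_mul_of_nonneg_right
        (mul_le_mul hs1 hs2 (by positivity) (hπpos hstar).le) hdn
    have hmp : 0 < m ^ 2 * P ^ 2 := by positivity
    have hfin : m ^ 2 * P ^ 2 * d ≤ m ^ 2 * P ^ 2 * ε := by nlinarith [key, hS, hSle]
    exact le_of_mul_le_mul_left hfin hmp
end

section
/- Let F be a finite edge multiset, let K ≥ 1 and k ∈ {1,…,K}, let ε > 0, and let E_k ⊆ F be a sub-multiset such that every edge {h,h'} ∈ E_k satisfies 2^{k−1}ε ≤ d(h,h') < 2^k ε, and such that 2^k · ε · |E_k| ≥ ψ(F)/K. If the point x ∈ X ρ-splits E_k (i.e. max{|(E_k)_x^+|, |(E_k)_x^−|} ≤ (1−ρ)|E_k|), then max{ψ(F_x^+), ψ(F_x^−)} ≤ (1 − ρ/(2K)) · ψ(F). -/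
open MeasureTheory Finset

/-- `ψ(E) = Σ_{{h,h'} ∈ E} d(h,h')` for a finite edge multiset `E`. -/
noncomputable def psiM {X 𝓗 : Type*} [MeasurableSpace X] (D : Measure X)
    (pred : 𝓗 → X → Bool) (E : Multiset (𝓗 × 𝓗)) : ℝ :=
  (E.map fun e => derr D pred e.1 e.2).sum


lemma psiM_nonneg' {X 𝓗 : Type*} [MeasurableSpace X] (D : Measure X)
    (pred : 𝓗 → X → Bool) (E : Multiset (𝓗 × 𝓗)) : 0 ≤ psiM D pred E := by
  refine Multiset.sum_nonneg ?_
  intro a ha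
  simp only [Multiset.mem_map] at ha
  obtain ⟨e, _, rfl⟩ := ha
  exact ENNReal.toReal_nonneg

lemma psiM_mono' {X 𝓗 : Type*} [MeasurableSpace X] (D : Measure X)
    (pred : 𝓗 → X → Bool) {E F : Multiset (𝓗 × 𝓗)} (h : E ≤ F) :
    psiM D pred E ≤ psiM D pred F := by
  obtain ⟨u, rfl⟩ := Multiset.le_iff_exists_add.mp h
  simp only [psiM, Multiset.map_add, Multiset.sum_add]
  have := psiM_nonneg' D pred u
  simp only [psiM] at this
  linarith

lemma psiM_key {X 𝓗 : Type*} [MeasurableSpace X] (D : Measure X)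
    (pred : 𝓗 → X → Bool) {E F : Multiset (𝓗 × 𝓗)} (hsub : E ≤ F)
    (p : 𝓗 × 𝓗 → Prop) [DecidablePred p] (c : ℝ) (hc : 0 ≤ c)
    (hlow : ∀ e ∈ E, c ≤ derr D pred e.1 e.2) :
    psiM D pred (F.filter p)
      + c * ((Multiset.card E : ℝ) - (Multiset.card (E.filter p) : ℝ))
      ≤ psiM D pred F := by
  have hFsplit : psiM D pred F
      = psiM D pred (F.filter p) + psiM D pred (F.filter (fun e => ¬ p e)) := by
    conv_lhs => rw [← Multiset.filter_add_not p F]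
    simp [psiM, Multiset.map_add, Multiset.sum_add]
  have hmono : psiM D pred (E.filter (fun e => ¬ p e))
      ≤ psiM D pred (F.filter (fun e => ¬ p e)) :=
    psiM_mono' D pred (Multiset.filter_le_filter _ hsub)
  have hcard : (Multiset.card (E.filter (fun e => ¬ p e)) : ℝ)
      = (Multiset.card E : ℝ) - (Multiset.card (E.filter p) : ℝ) := by
    have := Multiset.filter_add_not p E
    have hc2 : Multiset.card (E.filter p) + Multiset.card (E.filter (fun e => ¬ p e))
        = Multiset.card E := by
      rw [← Multiset.card_add, this]
    push_cast [← hc2]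
    ring
  have hlb : c * (Multiset.card (E.filter (fun e => ¬ p e)) : ℝ)
      ≤ psiM D pred (E.filter (fun e => ¬ p e)) := by
    have h1 : ∀ y ∈ (E.filter (fun e => ¬ p e)).map
        (fun e => derr D pred e.1 e.2), c ≤ y := by
      intro y hy
      simp only [Multiset.mem_map] at hy
      obtain ⟨e, he, rfl⟩ := hy
      exact hlow e (Multiset.mem_of_mem_filter he)
    have := Multiset.card_nsmul_le_sum h1
    simpa [psiM, mul_comm, nsmul_eq_mul] using this
  rw [hFsplit, ← hcard]
  linarith

/-- core computation of the splitting lemma, for edge multisets. -/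
theorem stmt_8 {X 𝓗 : Type*} [MeasurableSpace X]
    (D : Measure X) [IsProbabilityMeasure D] (pred : 𝓗 → X → Bool)
    (F Ek : Multiset (𝓗 × 𝓗)) (K k : ℕ) (hK : 1 ≤ K) (hk1 : 1 ≤ k) (hkK : k ≤ K)
    (ε ρ : ℝ) (hε : 0 < ε)
    (hsub : Ek ≤ F)
    (hlen : ∀ e ∈ Ek, (2 : ℝ) ^ (k - 1) * ε ≤ derr D pred e.1 e.2
      ∧ derr D pred e.1 e.2 < (2 : ℝ) ^ k * ε)
    (hbig : psiM D pred F / (K : ℝ) ≤ (2 : ℝ) ^ k * ε * (Multiset.card Ek : ℝ))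
    (x : X)
    (hsplit :
      ((max (Multiset.card (Ek.filter fun e => pred e.1 x = true ∧ pred e.2 x = true))
            (Multiset.card (Ek.filter fun e => pred e.1 x = false ∧ pred e.2 x = false)) : ℕ) : ℝ)
        ≤ (1 - ρ) * (Multiset.card Ek : ℝ)) :
    max (psiM D pred (F.filter fun e => pred e.1 x = true ∧ pred e.2 x = true))
        (psiM D pred (F.filter fun e => pred e.1 x = false ∧ pred e.2 x = false))
      ≤ (1 - ρ / (2 * (K : ℝ))) * psiM D pred F := by
  set pp : 𝓗 × 𝓗 → Prop := fun e => pred e.1 x = true ∧ pred e.2 x = true with hpp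
  set pm : 𝓗 × 𝓗 → Prop := fun e => pred e.1 x = false ∧ pred e.2 x = false with hpm
  have hψ0 : 0 ≤ psiM D pred F := psiM_nonneg' D pred F
  have hK0 : (0:ℝ) < (K:ℝ) := by exact_mod_cast hK
  rcases le_or_gt 0 ρ with hρ | hρ
  · -- main case
    have hc : (0:ℝ) ≤ (2:ℝ) ^ (k-1) * ε := by positivity
    have hpow : (2:ℝ) ^ k = 2 * (2:ℝ) ^ (k-1) := by
      have hk : k - 1 + 1 = k := Nat.sub_add_cancel hk1
      rw [← pow_succ', hk]
    have hbound : ∀ (p : 𝓗 × 𝓗 → Prop) [DecidablePred p],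
        ((Multiset.card (Ek.filter p) : ℕ) : ℝ) ≤ (1 - ρ) * (Multiset.card Ek : ℝ) →
        psiM D pred (F.filter p) ≤ (1 - ρ / (2 * (K : ℝ))) * psiM D pred F := by
      intro p _ hcard
      have hkey := psiM_key D pred hsub p ((2:ℝ) ^ (k-1) * ε) hc
        (fun e he => (hlen e he).1)
      have h1 : ρ * (Multiset.card Ek : ℝ)
          ≤ (Multiset.card Ek : ℝ) - (Multiset.card (Ek.filter p) : ℝ) := by
        nlinarith
      have h2 : (2:ℝ) ^ (k-1) * ε * (ρ * (Multiset.card Ek : ℝ))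
          ≤ (2:ℝ) ^ (k-1) * ε *
            ((Multiset.card Ek : ℝ) - (Multiset.card (Ek.filter p) : ℝ)) :=
        mul_le_mul_of_nonneg_left h1 hc
      have h3 : ρ / (2 * (K:ℝ)) * psiM D pred F
          ≤ (2:ℝ) ^ (k-1) * ε * (ρ * (Multiset.card Ek : ℝ)) := by
        have hb : psiM D pred F / (K:ℝ) ≤ 2 * ((2:ℝ) ^ (k-1) * ε) * (Multiset.card Ek : ℝ) :=
          calc psiM D pred F / (K:ℝ) ≤ (2:ℝ) ^ k * ε * (Multiset.card Ek : ℝ) := hbig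
            _ = 2 * ((2:ℝ) ^ (k-1) * ε) * (Multiset.card Ek : ℝ) := by rw [hpow]; ring
        have := mul_le_mul_of_nonneg_left hb hρ
        rw [div_mul_eq_mul_div, div_le_iff₀ (by positivity)]
        calc ρ * psiM D pred F = (ρ * (psiM D pred F / (K:ℝ))) * (K:ℝ) := by
              field_simp
          _ ≤ (ρ * (2 * ((2:ℝ) ^ (k-1) * ε) * (Multiset.card Ek : ℝ))) * (K:ℝ) := by
              apply mul_le_mul_of_nonneg_right this hK0.le
          _ = (2:ℝ) ^ (k-1) * ε * (ρ * (Multiset.card Ek : ℝ)) * (2 * (K:ℝ)) := by ring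
      linarith
    have hp : ((Multiset.card (Ek.filter pp) : ℕ) : ℝ) ≤ (1 - ρ) * (Multiset.card Ek : ℝ) := by
      refine le_trans ?_ hsplit
      exact_mod_cast le_max_left _ _
    have hm : ((Multiset.card (Ek.filter pm) : ℕ) : ℝ) ≤ (1 - ρ) * (Multiset.card Ek : ℝ) := by
      refine le_trans ?_ hsplit
      exact_mod_cast le_max_right _ _
    exact max_le (hbound pp hp) (hbound pm hm)
  · -- ρ < 0 : trivial bound
    have hr : psiM D pred F ≤ (1 - ρ / (2 * (K : ℝ))) * psiM D pred F := by
      nlinarith [div_nonpos_of_nonpos_of_nonneg hρ.le (by positivity : (0:ℝ) ≤ 2 * (K:ℝ))]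
    exact max_le
      (le_trans (psiM_mono' D pred (Multiset.filter_le _ _)) hr)
      (le_trans (psiM_mono' D pred (Multiset.filter_le _ _)) hr)
end

section
/- Let V ⊆ H with π(V) > 0 and Φ(V) > 0, let 0 < ρ̂ ≤ 1, and let x ∈ X and ρ ∈ (0,1] satisfy (π(V_x^+)/π(V))² · Φ(V_x^+) = (1−ρ)·Φ(V) and ρ ≤ ρ̂/2. Let Φ̂ be a real number with 0 < Φ̂ ≤ (1 + ρ̂/4)·Φ(V). If E consists of n pairs formed from 2n i.i.d. draws from π|_V, then Pr( (1/n)·ψ(E_x^+) ≤ (1 − ρ̂)·Φ̂ ) ≤ exp( − n·Φ̂·ρ̂² / 32 ). -/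
open MeasureTheory Finset

/-- `condw π V h` is the conditional probability `π|_V(h)`. -/
noncomputable def condw {𝓗 : Type*} [DecidableEq 𝓗] (π : 𝓗 → ℝ) (V : Finset 𝓗)
    (h : 𝓗) : ℝ :=
  if h ∈ V then π h / pmass π V else 0


lemma my_exp_quad {l : ℝ} (hl : 0 ≤ l) : Real.exp (-l) ≤ 1 - l + l^2/2 := by
  have h1 : 1 + l + l^2/2 ≤ Real.exp l := Real.quadratic_le_exp_of_nonneg hl
  have h2 : (0:ℝ) < Real.exp l := Real.exp_pos l
  have hq : (0:ℝ) < 1 - l + l^2/2 := by nlinarith [sq_nonneg (l-1)]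
  rw [Real.exp_neg, inv_eq_one_div, div_le_iff₀ h2]
  nlinarith [mul_le_mul_of_nonneg_left h1 hq.le, sq_nonneg (l^2), sq_nonneg l]

lemma my_convex_exp {l z : ℝ} (h0 : 0 ≤ z) (h1 : z ≤ 1) :
    Real.exp (-l * z) ≤ 1 - (1 - Real.exp (-l)) * z := by
  have h := convexOn_exp.2 (Set.mem_univ (0:ℝ)) (Set.mem_univ (-l))
    (by linarith : (0:ℝ) ≤ 1 - z) h0 (by ring)
  simp only [smul_eq_mul, mul_zero, zero_add, Real.exp_zero, mul_one] at h
  have : z * -l = -l * z := by ring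
  rw [this] at h
  linarith

lemma chernoff_lower {α : Type*} [Fintype α] (w f : α → ℝ)
    (hw0 : ∀ p, 0 ≤ w p) (hw1 : ∑ p, w p = 1)
    (hf0 : ∀ p, 0 ≤ f p) (hf1 : ∀ p, f p ≤ 1)
    (n : ℕ) (a c l : ℝ) (ha : 0 ≤ a) (hl : 0 ≤ l)
    (hle : l * a - (1 - Real.exp (-l)) * (∑ p, w p * f p) ≤ -c) :
    (∑ ω : Fin n → α, if (1/(n:ℝ)) * (∑ i, f (ω i)) ≤ a then ∏ i, w (ω i) else 0)
      ≤ Real.exp (-((n:ℝ) * c)) := by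
  classical
  set μ := ∑ p, w p * f p with hμdef
  set E := Real.exp (-l) with hEdef
  have hμ0 : 0 ≤ μ := Finset.sum_nonneg fun p _ => mul_nonneg (hw0 p) (hf0 p)
  have prodnn : ∀ ω : Fin n → α, (0:ℝ) ≤ ∏ i, w (ω i) :=
    fun ω => Finset.prod_nonneg fun i _ => hw0 _
  have step1 : (∑ ω : Fin n → α, if (1/(n:ℝ)) * (∑ i, f (ω i)) ≤ a
        then ∏ i, w (ω i) else 0)
      ≤ ∑ ω : Fin n → α, (∏ i, w (ω i)) *
          Real.exp (l * ((n:ℝ)*a - ∑ i, f (ω i))) := by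
    apply Finset.sum_le_sum
    intro ω _
    split_ifs with h
    · have hS : ∑ i, f (ω i) ≤ (n:ℝ) * a := by
        rcases Nat.eq_zero_or_pos n with h0 | hn
        · subst h0; simp
        · have hn' : (0:ℝ) < (n:ℝ) := by exact_mod_cast hn
          have := mul_le_mul_of_nonneg_left h hn'.le
          rw [← mul_assoc, mul_one_div, div_self hn'.ne', one_mul] at this
          linarith
      have h1 : (1:ℝ) ≤ Real.exp (l * ((n:ℝ)*a - ∑ i, f (ω i))) :=
        Real.one_le_exp (mul_nonneg hl (by linarith))
      exact le_mul_of_one_le_right (prodnn ω) h1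
    · exact mul_nonneg (prodnn ω) (Real.exp_pos _).le
  have step2 : ∑ ω : Fin n → α, (∏ i, w (ω i)) *
        Real.exp (l * ((n:ℝ)*a - ∑ i, f (ω i)))
      = Real.exp (l * (n:ℝ) * a) * (∑ p, w p * Real.exp (-l * f p))^n := by
    have hterm : ∀ ω : Fin n → α, (∏ i, w (ω i)) *
          Real.exp (l * ((n:ℝ)*a - ∑ i, f (ω i)))
        = Real.exp (l * (n:ℝ) * a) * ∏ i, (w (ω i) * Real.exp (-l * f (ω i))) := by
      intro ω
      have hS : ∑ i, -l * f (ω i) = -l * ∑ i, f (ω i) := by rw [← Finset.mul_sum]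
      rw [Finset.prod_mul_distrib, ← Real.exp_sum, hS,
        show Real.exp (l * ((n:ℝ)*a - ∑ i, f (ω i)))
            = Real.exp (l*(n:ℝ)*a) * Real.exp (-l * ∑ i, f (ω i)) by
          rw [← Real.exp_add]; congr 1; ring]
      ring
    rw [Finset.sum_congr rfl fun ω _ => hterm ω, ← Finset.mul_sum]
    congr 1
    have := Finset.prod_univ_sum (fun _ : Fin n => (Finset.univ : Finset α))
      (fun _ p => w p * Real.exp (-l * f p))
    rw [Fintype.piFinset_univ] at this
    rw [← this, Finset.prod_const, Finset.card_univ, Fintype.card_fin]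
  have step3 : ∑ p, w p * Real.exp (-l * f p) ≤ 1 - (1 - E) * μ := by
    calc ∑ p, w p * Real.exp (-l * f p)
        ≤ ∑ p, w p * (1 - (1 - E) * f p) :=
          Finset.sum_le_sum fun p _ =>
            mul_le_mul_of_nonneg_left (my_convex_exp (hf0 p) (hf1 p)) (hw0 p)
      _ = 1 - (1 - E) * μ := by
          simp only [mul_sub, mul_one, hμdef]
          rw [Finset.sum_sub_distrib, hw1, Finset.mul_sum]
          congr 1
          exact Finset.sum_congr rfl fun p _ => by ring
  have step4 : 1 - (1 - E) * μ ≤ Real.exp (-(1 - E) * μ) := by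
    have := Real.add_one_le_exp (-(1 - E) * μ)
    linarith
  have g0 : (0:ℝ) ≤ ∑ p, w p * Real.exp (-l * f p) :=
    Finset.sum_nonneg fun p _ => mul_nonneg (hw0 p) (Real.exp_pos _).le
  calc (∑ ω : Fin n → α, if (1/(n:ℝ)) * (∑ i, f (ω i)) ≤ a
        then ∏ i, w (ω i) else 0)
      ≤ Real.exp (l * (n:ℝ) * a) * (∑ p, w p * Real.exp (-l * f p))^n := by
        rw [← step2]; exact step1
    _ ≤ Real.exp (l * (n:ℝ) * a) * (Real.exp (-(1 - E) * μ))^n := by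
        apply mul_le_mul_of_nonneg_left _ (Real.exp_pos _).le
        exact pow_le_pow_left₀ g0 (step3.trans step4) n
    _ = Real.exp ((n:ℝ) * (l * a - (1 - E) * μ)) := by
        rw [← Real.exp_nat_mul, ← Real.exp_add]
        congr 1; ring
    _ ≤ Real.exp (-((n:ℝ) * c)) := by
        apply Real.exp_le_exp.2
        have := mul_le_mul_of_nonneg_left hle (Nat.cast_nonneg n : (0:ℝ) ≤ n)
        linarith

set_option maxHeartbeats 1000000 in
/-- if `x` exactly ρ-average splits `V` with `ρ ≤ ρ̂/2`, and
`0 < Φ̂ ≤ (1 + ρ̂/4) Φ(V)`, then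
`Pr((1/n) ψ(E_x^+) ≤ (1 - ρ̂) Φ̂) ≤ exp(-n Φ̂ ρ̂²/32)`,
where `E ~ (π|_V)^{2×n}` is written as a finite sum over outcomes. -/
theorem stmt_10 {X 𝓗 : Type*} [MeasurableSpace X] [Fintype 𝓗] [DecidableEq 𝓗]
    (D : Measure X) [IsProbabilityMeasure D] (pred : 𝓗 → X → Bool)
    (π : 𝓗 → ℝ) (hπpos : ∀ h, 0 < π h) (hπsum : ∑ h, π h = 1)
    (V : Finset 𝓗) (hV : 0 < pmass π V) (hΦ : 0 < avgDiam D pred π V)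
    (rhat : ℝ) (hr0 : 0 < rhat) (hr1 : rhat ≤ 1)
    (x : X) (ρ : ℝ) (hρ0 : 0 < ρ) (hρ1 : ρ ≤ 1)
    (hx : (pmass π (V.filter fun h => pred h x = true) / pmass π V) ^ 2
            * avgDiam D pred π (V.filter fun h => pred h x = true)
          = (1 - ρ) * avgDiam D pred π V)
    (hρr : ρ ≤ rhat / 2)
    (Φhat : ℝ) (hΦhat0 : 0 < Φhat)
    (hΦhat1 : Φhat ≤ (1 + rhat / 4) * avgDiam D pred π V)
    (n : ℕ) :
    (∑ ω : Fin n → 𝓗 × 𝓗,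
        if (1 / (n : ℝ)) * (∑ i,
              if pred (ω i).1 x = true ∧ pred (ω i).2 x = true
              then derr D pred (ω i).1 (ω i).2 else 0)
            ≤ (1 - rhat) * Φhat
        then ∏ i, condw π V (ω i).1 * condw π V (ω i).2 else 0)
      ≤ Real.exp (-((n : ℝ) * Φhat * rhat ^ 2) / 32) := by
  classical
  set Vp := V.filter (fun h => pred h x = true) with hVpdef
  obtain ⟨A, hAdef⟩ : ∃ A : ℝ, avgDiam D pred π V = A := ⟨_, rfl⟩
  rw [hAdef] at hΦ hΦhat1 hx
  set w : 𝓗 × 𝓗 → ℝ := fun p => condw π V p.1 * condw π V p.2 with hwdef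
  set f : 𝓗 × 𝓗 → ℝ := fun p =>
    if pred p.1 x = true ∧ pred p.2 x = true then derr D pred p.1 p.2 else 0
    with hfdef
  -- basic facts about condw
  have hcw0 : ∀ h, 0 ≤ condw π V h := by
    intro h; unfold condw; split
    · exact div_nonneg (hπpos h).le hV.le
    · exact le_rfl
  have hcwsum : ∑ h, condw π V h = 1 := by
    unfold condw
    rw [← Finset.sum_subset (Finset.subset_univ V) (fun h _ hh => if_neg hh)]
    rw [Finset.sum_congr rfl (fun h hh => if_pos hh), ← Finset.sum_div]
    exact div_self hV.ne'
  have hw0 : ∀ p, 0 ≤ w p := fun p => mul_nonneg (hcw0 _) (hcw0 _)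
  have hw1 : ∑ p, w p = 1 := by
    rw [hwdef, Fintype.sum_prod_type, ← Finset.sum_mul_sum, hcwsum]; norm_num
  -- derr is in [0,1]
  have hder0 : ∀ h h', 0 ≤ derr D pred h h' := fun h h' => ENNReal.toReal_nonneg
  have hder1 : ∀ h h', derr D pred h h' ≤ 1 := by
    intro h h'
    have hm := measure_mono (Set.subset_univ {y | pred h y ≠ pred h' y}) (μ := D)
    rw [measure_univ] at hm
    have := ENNReal.toReal_mono ENNReal.one_ne_top hm
    simpa [derr] using this
  have hf0 : ∀ p, 0 ≤ f p := by
    intro p; rw [hfdef]; dsimp only; split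
    · exact hder0 _ _
    · exact le_rfl
  have hf1 : ∀ p, f p ≤ 1 := by
    intro p; rw [hfdef]; dsimp only; split
    · exact hder1 _ _
    · norm_num
  -- the mean
  have hμ : ∑ p, w p * f p = (1 - ρ) * A := by
    have hterm : ∀ h h' : 𝓗, w (h, h') * f (h, h') =
        (if h ∈ Vp then π h else 0) * (if h' ∈ Vp then π h' else 0)
          * derr D pred h h' / (pmass π V) ^ 2 := by
      intro h h'
      simp only [hwdef, hfdef, condw, hVpdef, Finset.mem_filter]
      by_cases h1 : h ∈ V <;> by_cases h2 : h' ∈ V <;>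
        by_cases h3 : pred h x = true <;> by_cases h4 : pred h' x = true <;>
        simp [h1, h2, h3, h4] <;> ring
    rw [Fintype.sum_prod_type]
    rw [Finset.sum_congr rfl fun h _ => Finset.sum_congr rfl fun h' _ => hterm h h']
    simp only [← Finset.sum_div]
    have hnum : ∑ h : 𝓗, ∑ h' : 𝓗,
        (if h ∈ Vp then π h else 0) * (if h' ∈ Vp then π h' else 0) * derr D pred h h'
        = ∑ h ∈ Vp, ∑ h' ∈ Vp, π h * π h' * derr D pred h h' := by
      rw [← Finset.sum_subset (Finset.subset_univ Vp) (fun h _ hh => by simp [hh])]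
      refine Finset.sum_congr rfl fun h hh => ?_
      rw [← Finset.sum_subset (Finset.subset_univ Vp) (fun h' _ hh' => by simp [hh'])]
      exact Finset.sum_congr rfl fun h' hh' => by rw [if_pos hh, if_pos hh']
    rw [hnum]
    rcases Finset.eq_empty_or_nonempty Vp with he | hne
    · exfalso
      rw [he] at hx
      simp [pmass, avgDiam] at hx
      rcases hx with h | h <;> nlinarith
    · have hPp : 0 < pmass π Vp := Finset.sum_pos (fun h _ => (hπpos h)) hne
      have key : (∑ h ∈ Vp, ∑ h' ∈ Vp, π h * π h' * derr D pred h h') / (pmass π V) ^ 2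
          = (pmass π Vp / pmass π V) ^ 2 * avgDiam D pred π Vp := by
        simp only [avgDiam]
        field_simp
      rw [key, hx]
  -- numeric setup
  obtain ⟨a, hadef⟩ : ∃ a : ℝ, (1 - rhat) * Φhat = a := ⟨_, rfl⟩
  obtain ⟨μ, hμdef2⟩ : ∃ m : ℝ, (1 - ρ) * A = m := ⟨_, rfl⟩
  have hμpos : 0 < μ := by rw [← hμdef2]; nlinarith
  have hμA : μ ≤ A := by nlinarith [hμdef2]
  have ha : 0 ≤ a := by rw [← hadef]; nlinarith
  obtain ⟨d, hddef⟩ : ∃ d : ℝ, μ - a = d := ⟨_, rfl⟩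
  have hd : A * rhat * (1 + rhat) / 4 ≤ d := by
    have h1 : (1 - rhat / 2) * A ≤ μ := by rw [← hμdef2]; nlinarith
    have h2 : a ≤ (1 - rhat) * ((1 + rhat / 4) * A) := by
      rw [← hadef]; nlinarith
    rw [← hddef]; nlinarith
  have hdpos : 0 < d := lt_of_lt_of_le (by positivity) hd
  obtain ⟨l, hldef⟩ : ∃ l : ℝ, d / μ = l := ⟨_, rfl⟩
  have hl : 0 ≤ l := by rw [← hldef]; exact div_nonneg hdpos.le hμpos.le
  have hle : l * a - (1 - Real.exp (-l)) * μ ≤ -(Φhat * rhat ^ 2 / 32) := by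
    have hE := my_exp_quad hl
    have h1 : l * a - (1 - Real.exp (-l)) * μ ≤ l * a - (l - l ^ 2 / 2) * μ := by
      nlinarith
    have h2 : l * a - (l - l ^ 2 / 2) * μ = -(d ^ 2 / (2 * μ)) := by
      rw [← hldef, ← hddef]; field_simp [hμpos.ne']; ring
    have h3 : Φhat * rhat ^ 2 / 32 ≤ d ^ 2 / (2 * μ) := by
      rw [div_le_div_iff₀ (by norm_num) (by positivity)]
      have hsq : (A * rhat * (1 + rhat) / 4) ^ 2 ≤ d ^ 2 := by
        nlinarith [hd, hdpos.le, mul_pos (mul_pos hΦ hr0) (by linarith : (0:ℝ) < 1 + rhat)]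
      have t1 : Φhat * rhat ^ 2 * (2 * μ) ≤ ((1 + rhat / 4) * A) * rhat ^ 2 * (2 * A) := by
        gcongr
      have t2 : ((1 + rhat / 4) * A) * rhat ^ 2 * (2 * A)
          ≤ 32 * (A * rhat * (1 + rhat) / 4) ^ 2 := by
        nlinarith [sq_nonneg (A * rhat), hr0.le, mul_nonneg (sq_nonneg (A * rhat)) hr0.le,
          mul_nonneg (mul_nonneg (sq_nonneg (A * rhat)) hr0.le) hr0.le]
      linarith [hsq, t1, t2]
    linarith
  have main := chernoff_lower w f hw0 hw1 hf0 hf1 n ((1 - rhat) * Φhat)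
    (Φhat * rhat ^ 2 / 32) l (by rw [hadef]; exact ha) hl
    (by rw [hμ, hμdef2, hadef]; exact hle)
  refine le_trans main (le_of_eq ?_)
  congr 1
  ring
end

section
/- Let V ⊆ H with π(V) > 0 and Φ(V) > 0, let 0 < ρ̂ ≤ 1, and let x ∈ X and ρ satisfy 2ρ̂ ≤ ρ ≤ 1/2 together with (π(V_x^+)/π(V))² · Φ(V_x^+) ≤ (1−ρ)·Φ(V). Let Φ̂ be a real number with (1 − ρ̂/4)·Φ(V) ≤ Φ̂ ≤ (1 + ρ̂/4)·Φ(V). If E consists of n pairs formed from 2n i.i.d. draws from π|_V, then Pr( (1/n)·ψ(E_x^+) > (1 − ρ̂)·Φ̂ ) ≤ exp( − n·Φ̂·ρ̂² / 12 ). -/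
open MeasureTheory Finset

-- auxiliary lemmas
lemma derr_nonneg {X 𝓗 : Type*} [MeasurableSpace X] (D : Measure X)
    (pred : 𝓗 → X → Bool) (h h' : 𝓗) : 0 ≤ derr D pred h h' :=
  ENNReal.toReal_nonneg

lemma derr_le_one {X 𝓗 : Type*} [MeasurableSpace X] (D : Measure X)
    [IsProbabilityMeasure D] (pred : 𝓗 → X → Bool) (h h' : 𝓗) :
    derr D pred h h' ≤ 1 := by
  have h1 : D {x | pred h x ≠ pred h' x} ≤ D Set.univ :=
    measure_mono (Set.subset_univ _)
  have := ENNReal.toReal_mono (by simp [measure_univ]) h1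
  simpa [derr, measure_univ] using this

lemma exp_convex_bound (z l : ℝ) (hz0 : 0 ≤ z) (hz1 : z ≤ 1) :
    Real.exp (l * z) ≤ 1 + z * (Real.exp l - 1) := by
  have := convexOn_exp.2 (Set.mem_univ l) (Set.mem_univ 0) hz0
    (by linarith : (0:ℝ) ≤ 1 - z) (by ring)
  simp only [smul_eq_mul, mul_zero, add_zero, Real.exp_zero, mul_one] at this
  rw [mul_comm]; linarith

lemma sum_pow_fn {α : Type*} [Fintype α] (f : α → ℝ) (n : ℕ) :
    (∑ a, f a) ^ n = ∑ p : Fin n → α, ∏ i, f (p i) := by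
  rw [Finset.sum_pow', Fintype.piFinset_univ]

set_option maxHeartbeats 1000000 in
/-- if `(π(V_x^+)/π(V))² Φ(V_x^+) ≤ (1-ρ) Φ(V)` with
`2ρ̂ ≤ ρ ≤ 1/2`, and `(1 - ρ̂/4) Φ(V) ≤ Φ̂ ≤ (1 + ρ̂/4) Φ(V)`, then
`Pr((1/n) ψ(E_x^+) > (1 - ρ̂) Φ̂) ≤ exp(-n Φ̂ ρ̂²/12)`. -/
theorem stmt_11 {X 𝓗 : Type*} [MeasurableSpace X] [Fintype 𝓗] [DecidableEq 𝓗]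
    (D : Measure X) [IsProbabilityMeasure D] (pred : 𝓗 → X → Bool)
    (π : 𝓗 → ℝ) (hπpos : ∀ h, 0 < π h) (hπsum : ∑ h, π h = 1)
    (V : Finset 𝓗) (hV : 0 < pmass π V) (hΦ : 0 < avgDiam D pred π V)
    (rhat : ℝ) (hr0 : 0 < rhat) (hr1 : rhat ≤ 1)
    (x : X) (ρ : ℝ) (hρlb : 2 * rhat ≤ ρ) (hρub : ρ ≤ 1 / 2)
    (hx : (pmass π (V.filter fun h => pred h x = true) / pmass π V) ^ 2
            * avgDiam D pred π (V.filter fun h => pred h x = true)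
          ≤ (1 - ρ) * avgDiam D pred π V)
    (Φhat : ℝ)
    (hΦhat0 : (1 - rhat / 4) * avgDiam D pred π V ≤ Φhat)
    (hΦhat1 : Φhat ≤ (1 + rhat / 4) * avgDiam D pred π V)
    (n : ℕ) :
    (∑ ω : Fin n → 𝓗 × 𝓗,
        if (1 - rhat) * Φhat
            < (1 / (n : ℝ)) * (∑ i,
                if pred (ω i).1 x = true ∧ pred (ω i).2 x = true
                then derr D pred (ω i).1 (ω i).2 else 0)
        then ∏ i, condw π V (ω i).1 * condw π V (ω i).2 else 0)
      ≤ Real.exp (-((n : ℝ) * Φhat * rhat ^ 2) / 12) := by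
  classical
  set Φ := avgDiam D pred π V with hΦdef
  set A := V.filter (fun h => pred h x = true) with hA
  have hρ14 : rhat ≤ 1 / 4 := by linarith
  have hΦhatpos : 0 < Φhat := lt_of_lt_of_le (by nlinarith) hΦhat0
  set W : 𝓗 × 𝓗 → ℝ := fun p => condw π V p.1 * condw π V p.2 with hWdef
  set Z : 𝓗 × 𝓗 → ℝ := fun p =>
    if pred p.1 x = true ∧ pred p.2 x = true then derr D pred p.1 p.2 else 0
    with hZdef
  show (∑ ω : Fin n → 𝓗 × 𝓗,
      if (1 - rhat) * Φhat < (1 / (n : ℝ)) * ∑ i, Z (ω i)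
      then ∏ i, W (ω i) else 0)
    ≤ Real.exp (-((n : ℝ) * Φhat * rhat ^ 2) / 12)
  have hcw0 : ∀ h, 0 ≤ condw π V h := by
    intro h; rw [condw]
    split
    · exact div_nonneg (hπpos _).le hV.le
    · exact le_refl 0
  have hcwsum : ∑ h, condw π V h = 1 := by
    simp only [condw]
    rw [Finset.sum_ite_mem, Finset.univ_inter, ← Finset.sum_div]
    rw [show ∑ h ∈ V, π h = pmass π V from rfl, div_self (ne_of_gt hV)]
  have hW0 : ∀ p, 0 ≤ W p := fun p => mul_nonneg (hcw0 _) (hcw0 _)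
  have hWsum : ∑ p, W p = 1 := by
    rw [Fintype.sum_prod_type (f := W)]
    simp only [hWdef]
    rw [← Finset.sum_mul_sum, hcwsum, mul_one]
  have hZ0 : ∀ p, 0 ≤ Z p := by
    intro p; rw [hZdef]; dsimp only
    split
    · exact derr_nonneg D pred _ _
    · exact le_refl 0
  have hZ1 : ∀ p, Z p ≤ 1 := by
    intro p; rw [hZdef]; dsimp only
    split
    · exact derr_le_one D pred _ _
    · exact zero_le_one
  set μ := ∑ p, W p * Z p with hμdef
  have hμ0 : 0 ≤ μ := Finset.sum_nonneg fun p _ => mul_nonneg (hW0 p) (hZ0 p)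
  -- identify the mean
  have key : μ = (∑ h ∈ A, ∑ h' ∈ A, π h * π h' * derr D pred h h')
      / (pmass π V) ^ 2 := by
    have hterm : ∀ h h' : 𝓗, W (h, h') * Z (h, h') =
        (if h ∈ A then (if h' ∈ A then
          π h * π h' * derr D pred h h' / (pmass π V) ^ 2 else 0) else 0) := by
      intro h h'
      simp only [hWdef, hZdef, condw, hA, Finset.mem_filter]
      by_cases h1 : h ∈ V <;> by_cases h2 : h' ∈ V <;>
        by_cases h3 : pred h x = true <;> by_cases h4 : pred h' x = true <;>
        simp [h1, h2, h3, h4] <;> ring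
    rw [hμdef, Fintype.sum_prod_type]
    simp_rw [hterm]
    have hpush : ∀ h : 𝓗, (∑ h', if h ∈ A then (if h' ∈ A then
          π h * π h' * derr D pred h h' / (pmass π V) ^ 2 else 0) else 0)
        = if h ∈ A then ∑ h' ∈ A, π h * π h' * derr D pred h h' / (pmass π V) ^ 2
          else 0 := by
      intro h
      split_ifs with hh
      · rw [Fintype.sum_ite_mem]
      · simp
    simp_rw [hpush]
    rw [Fintype.sum_ite_mem]
    simp_rw [← Finset.sum_div]
  have hμle : μ ≤ (1 - ρ) * Φ := by
    refine le_trans (le_of_eq ?_) hx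
    rw [key]
    by_cases hAe : A.Nonempty
    · have hpA : 0 < pmass π A := Finset.sum_pos (fun h _ => hπpos h) hAe
      rw [avgDiam]
      field_simp
    · rw [Finset.not_nonempty_iff_eq_empty] at hAe
      simp [hAe, avgDiam, pmass]
  clear_value μ W Z A Φ
  clear key hA hΦdef hx hΦ hWdef hZdef hcw0 hcwsum
  -- handle n = 0
  rcases Nat.eq_zero_or_pos n with hn | hn
  · subst hn
    rw [Finset.sum_eq_zero]
    · positivity
    · intro ω _
      rw [if_neg]
      simp only [Nat.cast_zero, div_zero, Finset.univ_eq_empty, Finset.sum_empty,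
        mul_zero, zero_mul, not_lt]
      nlinarith
  have hn0 : (0:ℝ) < n := by exact_mod_cast hn
  -- Chernoff
  have hn0 : (0:ℝ) < n := by exact_mod_cast hn
  set lam : ℝ := rhat / 4 with hlam
  set t : ℝ := (1 - rhat) * Φhat with ht
  clear_value lam t
  have hlam0 : 0 < lam := by rw [hlam]; linarith
  have hl1 : 0 < 1 - lam := by rw [hlam]; linarith
  have hc0 : 0 ≤ Real.exp lam - 1 := by
    have := Real.one_le_exp (le_of_lt hlam0); linarith
  have hcub : Real.exp lam - 1 ≤ lam / (1 - lam) := by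
    have h1 : Real.exp lam ≤ 1 / (1 - lam) :=
      Real.exp_bound_div_one_sub_of_interval (le_of_lt hlam0) (by linarith)
    have h2 : (1:ℝ) / (1 - lam) - 1 = lam / (1 - lam) := by
      rw [div_sub_one hl1.ne']
      congr 1
      ring
    linarith
  -- the numeric heart
  have hfinal : μ * (Real.exp lam - 1) - lam * t ≤ -(Φhat * rhat ^ 2) / 12 := by
    set c := Real.exp lam - 1 with hc
    clear_value c
    have ha : μ ≤ (1 - 2 * rhat) * Φ := le_trans hμle (by nlinarith)
    have e1 : μ * (1 - lam) ≤ (1 - 2 * rhat) * Φhat := by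
      have i1 := mul_le_mul_of_nonneg_right ha hl1.le
      have i2 := mul_le_mul_of_nonneg_left hΦhat0
        (show (0:ℝ) ≤ 1 - 2 * rhat by linarith)
      nlinarith
    have e2 : c * (1 - lam) ≤ lam := by
      calc c * (1 - lam) ≤ (lam / (1 - lam)) * (1 - lam) :=
            mul_le_mul_of_nonneg_right hcub hl1.le
        _ = lam := div_mul_cancel₀ lam hl1.ne'
    have h5 : (μ * (1 - lam)) * (c * (1 - lam)) ≤ ((1 - 2 * rhat) * Φhat) * lam := by
      apply mul_le_mul e1 e2 (mul_nonneg hc0 hl1.le) ?_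
      nlinarith
    rw [hlam] at h5 hl1 ⊢
    rw [ht]
    have hq : (0:ℝ) < (1 - rhat / 4) ^ 2 := by positivity
    have h6 : ((1 - 2 * rhat) * Φhat) * (rhat / 4)
        ≤ ((rhat / 4) * (1 - rhat) * Φhat - Φhat * rhat ^ 2 / 12)
          * (1 - rhat / 4) ^ 2 := by
      nlinarith [mul_pos hΦhatpos hr0, mul_pos (mul_pos hΦhatpos hr0) hr0,
        mul_pos (mul_pos (mul_pos hΦhatpos hr0) hr0) hr0]
    have h7 : μ * c * (1 - rhat / 4) ^ 2
        ≤ ((rhat / 4) * (1 - rhat) * Φhat - Φhat * rhat ^ 2 / 12)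
          * (1 - rhat / 4) ^ 2 := by
      calc μ * c * (1 - rhat / 4) ^ 2
          = (μ * (1 - rhat / 4)) * (c * (1 - rhat / 4)) := by ring
        _ ≤ ((1 - 2 * rhat) * Φhat) * (rhat / 4) := h5
        _ ≤ _ := h6
    have h8 := le_of_mul_le_mul_right h7 hq
    linarith
  -- Chernoff steps
  have step1 : (∑ ω : Fin n → 𝓗 × 𝓗,
        if t < (1 / (n : ℝ)) * ∑ i, Z (ω i) then ∏ i, W (ω i) else 0)
      ≤ ∑ ω : Fin n → 𝓗 × 𝓗,
          (∏ i, W (ω i)) * Real.exp (lam * ((∑ i, Z (ω i)) - n * t)) := by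
    apply Finset.sum_le_sum
    intro ω _
    have hP : 0 ≤ ∏ i, W (ω i) := Finset.prod_nonneg fun i _ => hW0 _
    split_ifs with hcond
    · have hS : (n:ℝ) * t < ∑ i, Z (ω i) := by
        rw [one_div, inv_mul_eq_div] at hcond
        have := (lt_div_iff₀ hn0).mp hcond
        linarith
      have h1 : (1:ℝ) ≤ Real.exp (lam * ((∑ i, Z (ω i)) - n * t)) := by
        rw [← Real.exp_zero]
        apply Real.exp_le_exp.mpr
        exact mul_nonneg hlam0.le (by linarith)
      exact le_mul_of_one_le_right hP h1
    · exact mul_nonneg hP (Real.exp_nonneg _)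
  have step2 : (∑ ω : Fin n → 𝓗 × 𝓗,
        (∏ i, W (ω i)) * Real.exp (lam * ((∑ i, Z (ω i)) - n * t)))
      = Real.exp (-(lam * n * t)) * (∑ p, W p * Real.exp (lam * Z p)) ^ n := by
    rw [sum_pow_fn (fun p => W p * Real.exp (lam * Z p)) n, Finset.mul_sum]
    apply Finset.sum_congr rfl
    intro ω _
    rw [Finset.prod_mul_distrib, ← Real.exp_sum, ← Finset.mul_sum,
      mul_sub, Real.exp_sub, Real.exp_neg]
    ring
  have hSnn : ∀ p : 𝓗 × 𝓗, 0 ≤ W p * Real.exp (lam * Z p) :=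
    fun p => mul_nonneg (hW0 p) (Real.exp_nonneg _)
  have mgf : ∑ p, W p * Real.exp (lam * Z p) ≤ Real.exp (μ * (Real.exp lam - 1)) := by
    have h1 : ∑ p, W p * Real.exp (lam * Z p)
        ≤ ∑ p, W p * (1 + Z p * (Real.exp lam - 1)) :=
      Finset.sum_le_sum fun p _ =>
        mul_le_mul_of_nonneg_left (exp_convex_bound (Z p) lam (hZ0 p) (hZ1 p)) (hW0 p)
    have h2 : ∑ p, W p * (1 + Z p * (Real.exp lam - 1))
        = 1 + μ * (Real.exp lam - 1) := by
      simp_rw [mul_add, mul_one, ← mul_assoc]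
      rw [Finset.sum_add_distrib, hWsum, ← Finset.sum_mul, ← hμdef]
    have h3 : 1 + μ * (Real.exp lam - 1) ≤ Real.exp (μ * (Real.exp lam - 1)) := by
      rw [add_comm]; exact Real.add_one_le_exp _
    linarith
  calc (∑ ω : Fin n → 𝓗 × 𝓗,
        if t < (1 / (n : ℝ)) * ∑ i, Z (ω i) then ∏ i, W (ω i) else 0)
      ≤ Real.exp (-(lam * n * t)) * (∑ p, W p * Real.exp (lam * Z p)) ^ n :=
        step2 ▸ step1
    _ ≤ Real.exp (-(lam * n * t)) * (Real.exp (μ * (Real.exp lam - 1))) ^ n := by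
        apply mul_le_mul_of_nonneg_left _ (Real.exp_nonneg _)
        exact pow_le_pow_left₀ (Finset.sum_nonneg fun p _ => hSnn p) mgf n
    _ = Real.exp ((n : ℝ) * (μ * (Real.exp lam - 1) - lam * t)) := by
        rw [← Real.exp_nat_mul, ← Real.exp_add]
        ring_nf
    _ ≤ Real.exp (-((n : ℝ) * Φhat * rhat ^ 2) / 12) := by
        apply Real.exp_le_exp.mpr
        have h6 := mul_le_mul_of_nonneg_left hfinal (le_of_lt hn0)
        calc (n : ℝ) * (μ * (Real.exp lam - 1) - lam * t)
            ≤ (n : ℝ) * (-(Φhat * rhat ^ 2) / 12) := h6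
          _ = -((n : ℝ) * Φhat * rhat ^ 2) / 12 := by ring
end

section
/- Let V ⊆ H with π(V) > 0 and Φ(V) > 0, let 0 < ρ̂ ≤ 1, and let x ∈ X and ρ satisfy ρ > 1/2, ρ ≥ 2ρ̂, and (π(V_x^+)/π(V))² · Φ(V_x^+) ≤ (1−ρ)·Φ(V). Let Φ̂ be a real number with (1 − 1/16)·Φ(V) ≤ Φ̂ ≤ (1 + 1/16)·Φ(V). If E consists of n pairs formed from 2n i.i.d. draws from π|_V, then Pr( (1/n)·ψ(E_x^+) > (1 − ρ̂)·Φ̂ ) ≤ exp( − n·Φ̂² / 40 ). -/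
open MeasureTheory Finset

set_option maxHeartbeats 1000000

lemma exp_third_le : Real.exp (1/3 : ℝ) ≤ 679/486 := by
  have h := Real.exp_bound' (x := 1/3) (by norm_num) (by norm_num) (n := 3) (by norm_num)
  have h2 : (∑ m ∈ Finset.range 3, (1/3:ℝ) ^ m / m.factorial) +
      (1/3:ℝ) ^ 3 * (3 + 1) / (Nat.factorial 3 * 3) = 679/486 := by
    simp [Finset.sum_range_succ, Nat.factorial]
    norm_num
  linarith [h, h2.le]

lemma exp_convex_aux {t c : ℝ} (ht0 : 0 ≤ t) (ht1 : t ≤ 1) :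
    Real.exp (c * t) ≤ 1 + t * (Real.exp c - 1) := by
  have h := convexOn_exp.2 (Set.mem_univ (0:ℝ)) (Set.mem_univ c)
    (by linarith : (0:ℝ) ≤ 1 - t) ht0 (by ring)
  simp only [smul_eq_mul, mul_zero, zero_add, Real.exp_zero, mul_one] at h
  calc Real.exp (c * t) = Real.exp (t * c) := by ring_nf
    _ ≤ (1 - t) * 1 + t * Real.exp c := by simpa [mul_comm] using h
    _ = 1 + t * (Real.exp c - 1) := by ring

/-- if `(π(V_x^+)/π(V))² Φ(V_x^+) ≤ (1-ρ) Φ(V)` with `ρ > 1/2`,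
`ρ ≥ 2ρ̂`, and `(1 - 1/16) Φ(V) ≤ Φ̂ ≤ (1 + 1/16) Φ(V)`, then
`Pr((1/n) ψ(E_x^+) > (1 - ρ̂) Φ̂) ≤ exp(-n Φ̂²/40)`. -/
theorem stmt_12 {X 𝓗 : Type*} [MeasurableSpace X] [Fintype 𝓗] [DecidableEq 𝓗]
    (D : Measure X) [IsProbabilityMeasure D] (pred : 𝓗 → X → Bool)
    (π : 𝓗 → ℝ) (hπpos : ∀ h, 0 < π h) (hπsum : ∑ h, π h = 1)
    (V : Finset 𝓗) (hV : 0 < pmass π V) (hΦ : 0 < avgDiam D pred π V)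
    (rhat : ℝ) (hr0 : 0 < rhat) (hr1 : rhat ≤ 1)
    (x : X) (ρ : ℝ) (hρlb : 1 / 2 < ρ) (hρr : 2 * rhat ≤ ρ)
    (hx : (pmass π (V.filter fun h => pred h x = true) / pmass π V) ^ 2
            * avgDiam D pred π (V.filter fun h => pred h x = true)
          ≤ (1 - ρ) * avgDiam D pred π V)
    (Φhat : ℝ)
    (hΦhat0 : (1 - 1 / 16) * avgDiam D pred π V ≤ Φhat)
    (hΦhat1 : Φhat ≤ (1 + 1 / 16) * avgDiam D pred π V)
    (n : ℕ) :
    (∑ ω : Fin n → 𝓗 × 𝓗,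
        if (1 - rhat) * Φhat
            < (1 / (n : ℝ)) * (∑ i,
                if pred (ω i).1 x = true ∧ pred (ω i).2 x = true
                then derr D pred (ω i).1 (ω i).2 else 0)
        then ∏ i, condw π V (ω i).1 * condw π V (ω i).2 else 0)
      ≤ Real.exp (-((n : ℝ) * Φhat ^ 2) / 40) := by
  classical
  have hd0 : ∀ h h' : 𝓗, 0 ≤ derr D pred h h' := fun _ _ => ENNReal.toReal_nonneg
  have hd1 : ∀ h h' : 𝓗, derr D pred h h' ≤ 1 := by
    intro h h'
    have h1 : D {y | pred h y ≠ pred h' y} ≤ 1 := prob_le_one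
    have h2 := ENNReal.toReal_mono ENNReal.one_ne_top h1
    simpa [derr] using h2
  set Vp : Finset 𝓗 := V.filter (fun h => pred h x = true) with hVpdef
  set P : ℝ := pmass π V with hPdef
  set Φ : ℝ := avgDiam D pred π V with hΦdef
  set f : 𝓗 × 𝓗 → ℝ := fun p =>
    if pred p.1 x = true ∧ pred p.2 x = true then derr D pred p.1 p.2 else 0 with hfdef
  set w : 𝓗 × 𝓗 → ℝ := fun p => condw π V p.1 * condw π V p.2 with hwdef
  -- basic facts
  have hc0 : ∀ h, 0 ≤ condw π V h := by
    intro h; unfold condw; split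
    · exact div_nonneg (hπpos h).le hV.le
    · exact le_refl 0
  have hcsum : ∑ h, condw π V h = 1 := by
    have e1 : ∑ h, condw π V h = ∑ h ∈ Finset.univ ∩ V, π h / P := by
      rw [← Finset.sum_ite_mem]
      exact Finset.sum_congr rfl fun h _ => rfl
    rw [e1, Finset.univ_inter, ← Finset.sum_div]
    exact div_self hV.ne'
  have hw0 : ∀ p, 0 ≤ w p := fun p => mul_nonneg (hc0 _) (hc0 _)
  have hwsum : ∑ p : 𝓗 × 𝓗, w p = 1 := by
    rw [hwdef, Fintype.sum_prod_type]
    calc ∑ a, ∑ b, condw π V a * condw π V b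
        = (∑ a, condw π V a) * (∑ b, condw π V b) := by rw [Finset.sum_mul_sum]
      _ = 1 := by rw [hcsum, one_mul]
  have hf0 : ∀ p, 0 ≤ f p := by
    intro p; rw [hfdef]; dsimp only; split
    · exact hd0 _ _
    · exact le_refl 0
  have hf1 : ∀ p, f p ≤ 1 := by
    intro p; rw [hfdef]; dsimp only; split
    · exact hd1 _ _
    · norm_num
  -- the mean
  set μ : ℝ := ∑ p : 𝓗 × 𝓗, w p * f p with hμdef
  have hμ0 : 0 ≤ μ := Finset.sum_nonneg fun p _ => mul_nonneg (hw0 p) (hf0 p)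
  have hterm : ∀ h h' : 𝓗, w (h, h') * f (h, h') =
      (if h ∈ Vp then (if h' ∈ Vp then π h * π h' * derr D pred h h' / P ^ 2 else 0)
        else 0) := by
    intro h h'
    rw [hwdef, hfdef]
    simp only [condw, hVpdef, Finset.mem_filter, ← hPdef]
    by_cases h1 : h ∈ V <;> by_cases h2 : h' ∈ V <;>
      by_cases p1 : pred h x = true <;> by_cases p2 : pred h' x = true <;>
      simp [h1, h2, p1, p2] <;> ring
  have hμeq : μ = (∑ h ∈ Vp, ∑ h' ∈ Vp, π h * π h' * derr D pred h h') / P ^ 2 := by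
    calc μ = ∑ h, ∑ h', w (h, h') * f (h, h') := by rw [hμdef, Fintype.sum_prod_type]
      _ = ∑ h, ∑ h', (if h ∈ Vp then
            (if h' ∈ Vp then π h * π h' * derr D pred h h' / P ^ 2 else 0) else 0) :=
          Finset.sum_congr rfl fun h _ => Finset.sum_congr rfl fun h' _ => hterm h h'
      _ = ∑ h, (if h ∈ Vp then
            (∑ h', if h' ∈ Vp then π h * π h' * derr D pred h h' / P ^ 2 else 0) else 0) := by
          refine Finset.sum_congr rfl fun h _ => ?_
          split
          · rfl
          · simp
      _ = ∑ h ∈ Vp, ∑ h' ∈ Vp, π h * π h' * derr D pred h h' / P ^ 2 := by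
          simp only [Finset.sum_ite_mem, Finset.univ_inter]
      _ = (∑ h ∈ Vp, ∑ h' ∈ Vp, π h * π h' * derr D pred h h') / P ^ 2 := by
          rw [Finset.sum_div]
          exact Finset.sum_congr rfl fun h _ => by rw [Finset.sum_div]
  -- μ ≤ (1-ρ)Φ
  have hμle : μ ≤ (1 - ρ) * Φ := by
    rcases eq_or_ne (pmass π Vp) 0 with hPp | hPp
    · have hVpe : Vp = ∅ := by
        by_contra hne
        obtain ⟨h, hh⟩ := Finset.nonempty_of_ne_empty hne
        have : 0 < pmass π Vp := Finset.sum_pos (fun h _ => hπpos h) ⟨h, hh⟩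
        exact this.ne' hPp
      have : μ = 0 := by rw [hμeq, hVpe]; simp
      rw [this]
      have h0 : (pmass π Vp / P) ^ 2 * avgDiam D pred π Vp = 0 := by
        rw [hPp]; simp
      linarith [hx, h0.symm.le.trans hx]
    · have hPpos : 0 < pmass π Vp := by
        rcases (hPp.lt_or_gt) with h | h
        · exact absurd h (not_lt.mpr (Finset.sum_nonneg fun h _ => (hπpos h).le))
        · exact h
      have e : (pmass π Vp / P) ^ 2 * avgDiam D pred π Vp = μ := by
        rw [hμeq, avgDiam]
        field_simp
      linarith [hx, e.symm.le]
  -- Φ ≤ 1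
  have hΦ1 : Φ ≤ 1 := by
    rw [hΦdef, avgDiam, ← hPdef]
    rw [div_le_one (by positivity)]
    calc ∑ h ∈ V, ∑ h' ∈ V, π h * π h' * derr D pred h h'
        ≤ ∑ h ∈ V, ∑ h' ∈ V, π h * π h' := by
          refine Finset.sum_le_sum fun h _ => Finset.sum_le_sum fun h' _ => ?_
          have := mul_nonneg (hπpos h).le (hπpos h').le
          nlinarith [hd1 h h', hd0 h h']
      _ = P ^ 2 := by rw [← Finset.sum_mul_sum]; rw [hPdef, pmass]; ring
  -- ρ ≤ 1
  have hρ1 : ρ ≤ 1 := by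
    have h1 : 0 ≤ (pmass π Vp / P) ^ 2 * avgDiam D pred π Vp := by
      have : 0 ≤ avgDiam D pred π Vp := by
        rw [avgDiam]
        apply div_nonneg _ (sq_nonneg _)
        exact Finset.sum_nonneg fun h _ => Finset.sum_nonneg fun h' _ =>
          mul_nonneg (mul_nonneg (hπpos h).le (hπpos h').le) (hd0 h h')
      positivity
    nlinarith [hx, hΦ]
  have hΦhatpos : 0 < Φhat := by nlinarith [hΦhat0, hΦ]
  -- dispatch n = 0
  rcases Nat.eq_zero_or_pos n with hn0 | hn
  · subst hn0
    have hrhalf : rhat ≤ 1/2 := by linarith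
    refine le_trans (le_of_eq (Finset.sum_eq_zero fun ω _ => ?_)) (Real.exp_nonneg _)
    rw [if_neg]
    simp only [Nat.cast_zero, Finset.univ_eq_empty, Finset.sum_empty, mul_zero, div_zero,
      zero_mul, not_lt]
    nlinarith
  -- main case
  have hn' : (0:ℝ) < n := by exact_mod_cast hn
  set L : ℝ := Real.exp (1/3 : ℝ) with hLdef
  have hL1 : 1/3 + 1 ≤ L := Real.add_one_le_exp _
  have hLle : L ≤ 679/486 := exp_third_le
  set a : ℝ := (1 - rhat) * Φhat with hadef
  have step1 : ∀ ω : Fin n → 𝓗 × 𝓗,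
      (if a < (1/(n:ℝ)) * ∑ i, f (ω i) then ∏ i, w (ω i) else 0)
        ≤ (∏ i, (w (ω i) * Real.exp ((1/3) * f (ω i)))) *
            Real.exp (-(1/3) * ((n:ℝ) * a)) := by
    intro ω
    have hprod : ∏ i, (w (ω i) * Real.exp ((1/3) * f (ω i)))
        = (∏ i, w (ω i)) * Real.exp ((1/3) * ∑ i, f (ω i)) := by
      rw [Finset.prod_mul_distrib, ← Real.exp_sum, Finset.mul_sum]
    rw [hprod]
    split
    case isTrue hcase =>
      have hS : (n:ℝ) * a ≤ ∑ i, f (ω i) := by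
        rw [one_div, inv_mul_eq_div, lt_div_iff₀ hn'] at hcase
        nlinarith [hcase]
      have h1 : 1 ≤ Real.exp ((1/3) * ∑ i, f (ω i)) * Real.exp (-(1/3) * ((n:ℝ) * a)) := by
        rw [← Real.exp_add]
        have harg : 0 ≤ (1/3) * (∑ i, f (ω i)) + (-(1/3)) * ((n:ℝ) * a) := by linarith
        calc (1:ℝ) = Real.exp 0 := Real.exp_zero.symm
          _ ≤ _ := Real.exp_le_exp.mpr harg
      have hw' : 0 ≤ ∏ i, w (ω i) := Finset.prod_nonneg fun i _ => hw0 _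
      calc ∏ i, w (ω i) = (∏ i, w (ω i)) * 1 := (mul_one _).symm
        _ ≤ (∏ i, w (ω i)) * (Real.exp ((1/3) * ∑ i, f (ω i)) *
              Real.exp (-(1/3) * ((n:ℝ) * a))) := mul_le_mul_of_nonneg_left h1 hw'
        _ = _ := by ring
    case isFalse =>
      have hw' : 0 ≤ ∏ i, w (ω i) := Finset.prod_nonneg fun i _ => hw0 _
      positivity
  have step2 : (∑ ω : Fin n → 𝓗 × 𝓗,
        if a < (1/(n:ℝ)) * ∑ i, f (ω i) then ∏ i, w (ω i) else 0)
      ≤ (∑ p : 𝓗 × 𝓗, w p * Real.exp ((1/3) * f p)) ^ n *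
          Real.exp (-(1/3) * ((n:ℝ) * a)) := by
    calc (∑ ω : Fin n → 𝓗 × 𝓗,
          if a < (1/(n:ℝ)) * ∑ i, f (ω i) then ∏ i, w (ω i) else 0)
        ≤ ∑ ω : Fin n → 𝓗 × 𝓗, (∏ i, (w (ω i) * Real.exp ((1/3) * f (ω i)))) *
            Real.exp (-(1/3) * ((n:ℝ) * a)) := Finset.sum_le_sum fun ω _ => step1 ω
      _ = (∑ ω : Fin n → 𝓗 × 𝓗, ∏ i, (w (ω i) * Real.exp ((1/3) * f (ω i)))) *
            Real.exp (-(1/3) * ((n:ℝ) * a)) := by rw [← Finset.sum_mul]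
      _ = _ := by
          have hsp := (Fintype.sum_pow (fun p : 𝓗 × 𝓗 => w p * Real.exp ((1/3) * f p)) n).symm
          exact congrArg (· * Real.exp (-(1/3) * ((n:ℝ) * a))) hsp
  have hM0 : 0 ≤ ∑ p : 𝓗 × 𝓗, w p * Real.exp ((1/3) * f p) :=
    Finset.sum_nonneg fun p _ => mul_nonneg (hw0 p) (Real.exp_pos _).le
  have hMle : (∑ p : 𝓗 × 𝓗, w p * Real.exp ((1/3) * f p)) ≤ Real.exp (μ * (L - 1)) := by
    have h1 : (∑ p : 𝓗 × 𝓗, w p * Real.exp ((1/3) * f p))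
        ≤ ∑ p : 𝓗 × 𝓗, w p * (1 + f p * (L - 1)) :=
      Finset.sum_le_sum fun p _ =>
        mul_le_mul_of_nonneg_left (exp_convex_aux (hf0 p) (hf1 p)) (hw0 p)
    have h2 : ∑ p : 𝓗 × 𝓗, w p * (1 + f p * (L - 1)) = 1 + μ * (L - 1) := by
      have e : ∀ p : 𝓗 × 𝓗, w p * (1 + f p * (L - 1))
          = w p + (w p * f p) * (L - 1) := fun p => by ring
      simp only [e]
      rw [Finset.sum_add_distrib, hwsum, ← Finset.sum_mul, ← hμdef]
    have h3 : 1 + μ * (L - 1) ≤ Real.exp (μ * (L - 1)) := by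
      linarith [Real.add_one_le_exp (μ * (L - 1))]
    linarith
  have hpow : (∑ p : 𝓗 × 𝓗, w p * Real.exp ((1/3) * f p)) ^ n
      ≤ Real.exp (μ * (L - 1)) ^ n := pow_le_pow_left₀ hM0 hMle n
  have hexp : Real.exp (μ * (L - 1)) ^ n * Real.exp (-(1/3) * ((n:ℝ) * a))
      = Real.exp ((n:ℝ) * (μ * (L - 1)) + (-(1/3)) * ((n:ℝ) * a)) := by
    rw [← Real.exp_nat_mul, ← Real.exp_add]
  -- numeric comparison
  have hunit : μ * (L - 1) + (-(1/3)) * a ≤ -(Φhat ^ 2) / 40 := by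
    have hρnn : 0 ≤ 1 - ρ := by
      have hnum : 0 ≤ (1 - ρ) * Φ := le_trans hμ0 hμle
      nlinarith [hΦ]
    have hstep1 : μ * (L - 1) ≤ ((1 - ρ) * Φ) * (L - 1) :=
      mul_le_mul_of_nonneg_right hμle (by linarith)
    have hstep2 : ((1 - ρ) * Φ) * (L - 1) ≤ ((1 - ρ) * Φ) * (193/486) :=
      mul_le_mul_of_nonneg_left (by linarith) (le_trans hμ0 hμle)
    have hΦle : Φ ≤ (16/15) * Φhat := by linarith
    have hstep3 : (1 - ρ) * Φ ≤ (1 - ρ) * ((16/15) * Φhat) :=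
      mul_le_mul_of_nonneg_left hΦle hρnn
    have hrr : rhat * Φhat ≤ (ρ/2) * Φhat :=
      mul_le_mul_of_nonneg_right (by linarith) hΦhatpos.le
    have hΦhat116 : Φhat ≤ 17/16 := by nlinarith [hΦhat1, hΦ1, hΦ]
    have hsq : Φhat ^ 2 ≤ (17/16) * Φhat := by nlinarith [hΦhatpos]
    have hρΦ : (1/2) * Φhat ≤ ρ * Φhat :=
      mul_le_mul_of_nonneg_right (by linarith) hΦhatpos.le
    rw [hadef]
    nlinarith [hstep1, hstep2, hstep3, hrr, hsq, hρΦ, hΦhatpos]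
  have hfinal : (n:ℝ) * (μ * (L - 1)) + (-(1/3)) * ((n:ℝ) * a)
      ≤ -((n:ℝ) * Φhat ^ 2) / 40 := by
    have := mul_le_mul_of_nonneg_left hunit (le_of_lt hn')
    calc (n:ℝ) * (μ * (L - 1)) + (-(1/3)) * ((n:ℝ) * a)
        = (n:ℝ) * (μ * (L - 1) + (-(1/3)) * a) := by ring
      _ ≤ (n:ℝ) * (-(Φhat ^ 2) / 40) := this
      _ = -((n:ℝ) * Φhat ^ 2) / 40 := by ring
  calc (∑ ω : Fin n → 𝓗 × 𝓗,
        if a < (1/(n:ℝ)) * ∑ i, f (ω i) then ∏ i, w (ω i) else 0)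
      ≤ (∑ p : 𝓗 × 𝓗, w p * Real.exp ((1/3) * f p)) ^ n *
          Real.exp (-(1/3) * ((n:ℝ) * a)) := step2
    _ ≤ Real.exp (μ * (L - 1)) ^ n * Real.exp (-(1/3) * ((n:ℝ) * a)) :=
        mul_le_mul_of_nonneg_right hpow (Real.exp_pos _).le
    _ = Real.exp ((n:ℝ) * (μ * (L - 1)) + (-(1/3)) * ((n:ℝ) * a)) := hexp
    _ ≤ Real.exp (-((n:ℝ) * Φhat ^ 2) / 40) := Real.exp_le_exp.mpr hfinal
end

section
/- Let V = {h_1, …, h_n} be a set of n ≥ 3 hypotheses such that d(h_i, h_j) = 1/2 for all i ≠ j, and let π be the uniform distribution on V. Then for every partition of V into two disjoint sets A and B (A ∪ B = V), max{Φ(A), Φ(B)} ≥ ((n−2)/(n−1)) · Φ(V), where if one part is empty the maximum is taken over the nonempty part. In particular, for any binary query x partitioning V into V_x^+ and V_x^−, max{Φ(V_x^+), Φ(V_x^−)} ≥ ((n−2)/(n−1)) · Φ(V). -/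
open MeasureTheory Finset

lemma derr_self' {X 𝓗 : Type*} [MeasurableSpace X] (D : Measure X)
    (pred : 𝓗 → X → Bool) (h : 𝓗) : derr D pred h h = 0 := by
  simp [derr]

lemma avg_eq {X 𝓗 : Type*} [MeasurableSpace X] [DecidableEq 𝓗] (D : Measure X)
    (pred : 𝓗 → X → Bool) (n : ℕ) (hn : 3 ≤ n)
    (hd : ∀ h h' : 𝓗, h ≠ h' → derr D pred h h' = 1 / 2)
    (A : Finset 𝓗) (hA : A.Nonempty) :
    avgDiam D pred (fun _ => 1 / (n : ℝ)) A = ((A.card : ℝ) - 1) / (2 * A.card) := by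
  have hnpos : (0:ℝ) < n := by
    have : 0 < n := by omega
    exact_mod_cast this
  have hkpos : (0:ℝ) < A.card := by exact_mod_cast hA.card_pos
  have key : ∀ h ∈ A, ∑ h' ∈ A, derr D pred h h' = ((A.card : ℝ) - 1) / 2 := by
    intro h hh
    rw [← Finset.add_sum_erase A _ hh, derr_self', zero_add]
    rw [Finset.sum_congr rfl (fun h' hh' => hd h h' (Finset.ne_of_mem_erase hh').symm)]
    rw [Finset.sum_const, Finset.card_erase_of_mem hh]
    have : ((A.card - 1 : ℕ) : ℝ) = (A.card : ℝ) - 1 := by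
      have := hA.card_pos; push_cast [Nat.cast_sub this]; ring
    rw [nsmul_eq_mul, this]; ring
  have hsum : ∑ h ∈ A, ∑ h' ∈ A, (1 / (n:ℝ)) * (1 / (n:ℝ)) * derr D pred h h'
      = (1 / (n:ℝ))^2 * (A.card * (((A.card : ℝ) - 1) / 2)) := by
    rw [Finset.sum_congr rfl (fun h hh => by
      rw [← Finset.mul_sum, key h hh])]
    rw [Finset.sum_const, nsmul_eq_mul]; ring
  have hp : pmass (fun _ => 1 / (n : ℝ)) A = A.card * (1 / (n:ℝ)) := by
    simp [pmass, mul_comm]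
  rw [avgDiam, hsum, hp]
  field_simp

lemma key_ineq {X 𝓗 : Type*} [MeasurableSpace X] [Fintype 𝓗] [DecidableEq 𝓗]
    (D : Measure X) (pred : 𝓗 → X → Bool)
    (n : ℕ) (hn : 3 ≤ n) (hcard : Fintype.card 𝓗 = n)
    (hd : ∀ h h' : 𝓗, h ≠ h' → derr D pred h h' = 1 / 2)
    (A : Finset 𝓗) (hA : A.Nonempty) (h2 : n ≤ 2 * A.card) :
    ((n : ℝ) - 2) / ((n : ℝ) - 1)
        * avgDiam D pred (fun _ => 1 / (n : ℝ)) (Finset.univ : Finset 𝓗)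
      ≤ avgDiam D pred (fun _ => 1 / (n : ℝ)) A := by
  have huniv : (Finset.univ : Finset 𝓗).Nonempty := by
    rw [← Finset.card_pos, Finset.card_univ, hcard]; omega
  rw [avg_eq D pred n hn hd _ huniv, avg_eq D pred n hn hd A hA,
    Finset.card_univ, hcard]
  have hnpos : (0:ℝ) < n := by exact_mod_cast (by omega : 0 < n)
  have hn1 : (0:ℝ) < (n:ℝ) - 1 := by
    have : (3:ℝ) ≤ n := by exact_mod_cast hn
    linarith
  have hkpos : (0:ℝ) < A.card := by exact_mod_cast hA.card_pos
  have h2' : (n:ℝ) ≤ 2 * A.card := by exact_mod_cast h2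
  rw [div_mul_div_comm, div_le_div_iff₀ (by positivity) (by positivity)]
  nlinarith [hkpos, hnpos]

/-- if `V` consists of `n ≥ 3` hypotheses with pairwise distance
`1/2` and `π` is uniform on `V`, then for every partition of `V` into disjoint
sets `A` and `B`, `max{Φ(A), Φ(B)} ≥ ((n-2)/(n-1)) Φ(V)`; in particular, for any
binary query `x` partitioning `V` into `V_x^+` and `V_x^-`,
`max{Φ(V_x^+), Φ(V_x^-)} ≥ ((n-2)/(n-1)) Φ(V)`.  (The average diameter of the
empty set is `0` by convention, so the maximum is effectively taken over the
nonempty parts.) -/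
theorem stmt_17 {X 𝓗 : Type*} [MeasurableSpace X] [Fintype 𝓗] [DecidableEq 𝓗]
    (D : Measure X) [IsProbabilityMeasure D] (pred : 𝓗 → X → Bool)
    (n : ℕ) (hn : 3 ≤ n) (hcard : Fintype.card 𝓗 = n)
    (hd : ∀ h h' : 𝓗, h ≠ h' → derr D pred h h' = 1 / 2) :
    (∀ A B : Finset 𝓗, Disjoint A B → A ∪ B = Finset.univ →
        ((n : ℝ) - 2) / ((n : ℝ) - 1)
            * avgDiam D pred (fun _ => 1 / (n : ℝ)) (Finset.univ : Finset 𝓗)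
          ≤ max (avgDiam D pred (fun _ => 1 / (n : ℝ)) A)
              (avgDiam D pred (fun _ => 1 / (n : ℝ)) B))
      ∧ ∀ x : X,
        ((n : ℝ) - 2) / ((n : ℝ) - 1)
            * avgDiam D pred (fun _ => 1 / (n : ℝ)) (Finset.univ : Finset 𝓗)
          ≤ max
              (avgDiam D pred (fun _ => 1 / (n : ℝ))
                (Finset.univ.filter fun h => pred h x = true))
              (avgDiam D pred (fun _ => 1 / (n : ℝ))
                (Finset.univ.filter fun h => pred h x = false)) := by
  have main : ∀ A B : Finset 𝓗, Disjoint A B → A ∪ B = Finset.univ →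
      ((n : ℝ) - 2) / ((n : ℝ) - 1)
          * avgDiam D pred (fun _ => 1 / (n : ℝ)) (Finset.univ : Finset 𝓗)
        ≤ max (avgDiam D pred (fun _ => 1 / (n : ℝ)) A)
            (avgDiam D pred (fun _ => 1 / (n : ℝ)) B) := by
    intro A B hdisj hunion
    have hsum : A.card + B.card = n := by
      rw [← Finset.card_union_of_disjoint hdisj, hunion, Finset.card_univ, hcard]
    rcases le_or_gt A.card B.card with hle | hlt
    · have hB : B.Nonempty := by
        rw [← Finset.card_pos]; omega
      exact le_trans (key_ineq D pred n hn hcard hd B hB (by omega))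
        (le_max_right _ _)
    · have hA : A.Nonempty := by
        rw [← Finset.card_pos]; omega
      exact le_trans (key_ineq D pred n hn hcard hd A hA (by omega))
        (le_max_left _ _)
  refine ⟨main, fun x => main _ _ ?_ ?_⟩
  · simp [Finset.disjoint_filter]
  · ext h; simp [Bool.eq_false_or_eq_true (pred h x)]
end
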